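/- Let φ: S → T be a premorphism between restriction semigroups. The following are equivalent: (1) φ satisfies (M): φ(s)φ(t) = φ(st) for all s, t ∈ S; (2) φ satisfies (LM): φ(s t^+)φ(s^* t) = φ(st) for all s, t ∈ S, together with (OP): s ≤ t implies φ(s) ≤ φ(t); (3) φ satisfies (LMr): φ(s t^+)φ(t) = φ(st) for all s, t ∈ S, together with (OP); (4) φ satisfies (LMl): φ(s)φ(s^* t) = φ(st) for all s, t ∈ S, together with (OP). -/
import Mathlib


/-- A (two-sided) restriction semigroup: a semigroup with unary operations
`rstar` (`x ↦ x^*`) and `rplus` (`x ↦ x^+`) satisfying the standard identities. -/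
class RestrictionSemigroup (S : Type*) extends Semigroup S where
  rstar : S → S
  rplus : S → S
  rplus_mul_self : ∀ x : S, rplus x * x = x
  rplus_comm : ∀ x y : S, rplus x * rplus y = rplus y * rplus x
  rplus_rplus_mul : ∀ x y : S, rplus (rplus x * y) = rplus x * rplus y
  mul_rplus : ∀ x y : S, rplus (x * y) * x = x * rplus y
  mul_rstar_self : ∀ x : S, x * rstar x = x
  rstar_comm : ∀ x y : S, rstar x * rstar y = rstar y * rstar x
  rstar_mul_rstar : ∀ x y : S, rstar (x * rstar y) = rstar x * rstar y
  rstar_mul : ∀ x y : S, y * rstar (x * y) = rstar x * y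
  rstar_rplus : ∀ x : S, rstar (rplus x) = rplus x
  rplus_rstar : ∀ x : S, rplus (rstar x) = rstar x

open RestrictionSemigroup

/-- `e` is a projection: `e ∈ P(S) = {s^* : s ∈ S}`. -/
def IsProj {S : Type*} [RestrictionSemigroup S] (e : S) : Prop :=
  ∃ s : S, rstar s = e

/-- The natural partial order: `s ≤ t` iff `s = t f` for some projection `f`. -/
def rle {S : Type*} [RestrictionSemigroup S] (s t : S) : Prop :=
  ∃ f : S, IsProj f ∧ s = t * f

/-- Compatibility: `s ∼ t` iff `s t^* = t s^*` and `t^+ s = s^+ t`. -/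
def compat {S : Type*} [RestrictionSemigroup S] (s t : S) : Prop :=
  s * rstar t = t * rstar s ∧ rplus t * s = rplus s * t

section Aux
variable {S : Type*} [RestrictionSemigroup S]

lemma rstar_rstar (x : S) : rstar (rstar x) = rstar x := by
  have h := rstar_rplus (rstar x)
  rwa [rplus_rstar] at h

lemma isProj_rstar (x : S) : IsProj (rstar x) := ⟨x, rfl⟩
lemma isProj_rplus (x : S) : IsProj (rplus x) := ⟨rplus x, rstar_rplus x⟩

lemma IsProj.rstar_eq {e : S} (h : IsProj e) : rstar e = e := by
  obtain ⟨s, rfl⟩ := h; exact rstar_rstar s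

lemma IsProj.idem {e : S} (h : IsProj e) : e * e = e := by
  nth_rewrite 2 [← h.rstar_eq]
  exact mul_rstar_self e

lemma IsProj.mul {e f : S} (he : IsProj e) (hf : IsProj f) : IsProj (e * f) := by
  refine ⟨e * f, ?_⟩
  nth_rewrite 1 [← hf.rstar_eq]
  rw [rstar_mul_rstar, he.rstar_eq, hf.rstar_eq]

lemma IsProj.comm {e f : S} (he : IsProj e) (hf : IsProj f) : e * f = f * e := by
  nth_rewrite 1 [← he.rstar_eq]
  nth_rewrite 1 [← hf.rstar_eq]
  rw [rstar_comm, hf.rstar_eq, he.rstar_eq]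

lemma rle_refl (s : S) : rle s s := ⟨rstar s, isProj_rstar s, (mul_rstar_self s).symm⟩

lemma proj_mul_eq {f : S} (hf : IsProj f) (z : S) : f * z = z * rstar (f * z) := by
  rw [rstar_mul, hf.rstar_eq]

lemma rle_mul_right {x y : S} (h : rle x y) (z : S) : rle (x * z) (y * z) := by
  obtain ⟨f, hf, rfl⟩ := h
  exact ⟨rstar (f * z), isProj_rstar _, by rw [mul_assoc, mul_assoc, ← proj_mul_eq hf]⟩

lemma rle_mul_left {x y : S} (h : rle x y) (z : S) : rle (z * x) (z * y) := by
  obtain ⟨f, hf, rfl⟩ := h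
  exact ⟨f, hf, (mul_assoc z y f).symm⟩

lemma rle_trans {x y z : S} (h1 : rle x y) (h2 : rle y z) : rle x z := by
  obtain ⟨f, hf, rfl⟩ := h1
  obtain ⟨g, hg, rfl⟩ := h2
  exact ⟨g * f, hg.mul hf, (mul_assoc z g f)⟩

lemma rle_antisymm {a b : S} (h1 : rle a b) (h2 : rle b a) : a = b := by
  obtain ⟨f, hf, h1⟩ := h1
  obtain ⟨g, hg, h2⟩ := h2
  have hb : b = b * (f * g) := by
    rw [← mul_assoc, ← h1, ← h2]
  calc a = b * f := h1
    _ = (b * (f * g)) * f := by rw [← hb]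
    _ = b * (f * (g * f)) := by rw [mul_assoc, mul_assoc]
    _ = b * (f * (f * g)) := by rw [hg.comm hf]
    _ = b * ((f * f) * g) := by rw [mul_assoc]
    _ = b * (f * g) := by rw [hf.idem]
    _ = b := hb.symm

lemma rle_mul {a b c d : S} (h1 : rle a b) (h2 : rle c d) : rle (a * c) (b * d) :=
  rle_trans (rle_mul_right h1 c) (rle_mul_left h2 b)

lemma rle_eq {s t : S} (h : rle s t) : s = t * rstar s := by
  obtain ⟨f, hf, rfl⟩ := h
  nth_rewrite 2 [← hf.rstar_eq]
  rw [rstar_mul_rstar, ← mul_assoc, mul_rstar_self, hf.rstar_eq]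

end Aux
theorem stmt13 {S T : Type*} [RestrictionSemigroup S] [RestrictionSemigroup T]
    (φ : S → T)
    (hPM1 : ∀ s t : S, rle (φ s * φ t) (φ (s * t)))
    (hPM2 : ∀ s : S, rle (rstar (φ s)) (φ (rstar s)))
    (hPM3 : ∀ s : S, rle (rplus (φ s)) (φ (rplus s))) :
    List.TFAE
      [∀ s t : S, φ s * φ t = φ (s * t),
       (∀ s t : S, φ (s * rplus t) * φ (rstar s * t) = φ (s * t)) ∧
         (∀ s t : S, rle s t → rle (φ s) (φ t)),
       (∀ s t : S, φ (s * rplus t) * φ t = φ (s * t)) ∧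
         (∀ s t : S, rle s t → rle (φ s) (φ t)),
       (∀ s t : S, φ s * φ (rstar s * t) = φ (s * t)) ∧
         (∀ s t : S, rle s t → rle (φ s) (φ t))] := by
  -- basic order facts used repeatedly
  have hle_plus : ∀ s t : S, rle (s * rplus t) s := fun s t => ⟨rplus t, isProj_rplus t, rfl⟩
  have hle_star : ∀ s t : S, rle (rstar s * t) t :=
    fun s t => ⟨rstar (s * t), isProj_rstar _, (rstar_mul s t).symm⟩
  -- (M) implies order-preserving
  have hOP : (∀ s t : S, φ s * φ t = φ (s * t)) → ∀ s t : S, rle s t → rle (φ s) (φ t) := by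
    intro hM s t hst
    have h2 : φ s = φ t * φ (rstar s) := by rw [hM, ← rle_eq hst]
    obtain ⟨h, hh, hh2⟩ := hPM2 s
    have hidem : φ (rstar s) * φ (rstar s) = φ (rstar s) := by
      rw [hM, (isProj_rstar s).idem]
    have h3 : φ (rstar s) * rstar (φ s) = rstar (φ s) := by
      rw [hh2, ← mul_assoc, hidem]
    refine ⟨rstar (φ s), isProj_rstar _, ?_⟩
    rw [← h3, ← mul_assoc, ← h2, mul_rstar_self]
  tfae_have 1 → 2 := by
    intro hM
    refine ⟨fun s t => ?_, hOP hM⟩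
    rw [hM]
    congr 1
    have hc : rplus t * rstar s = rstar s * rplus t := (isProj_rplus t).comm (isProj_rstar s)
    rw [mul_assoc, ← mul_assoc (rplus t), hc, mul_assoc, rplus_mul_self, ← mul_assoc,
      mul_rstar_self]
  tfae_have 1 → 3 := by
    intro hM
    refine ⟨fun s t => ?_, hOP hM⟩
    rw [hM, mul_assoc, rplus_mul_self]
  tfae_have 1 → 4 := by
    intro hM
    refine ⟨fun s t => ?_, hOP hM⟩
    rw [hM, ← mul_assoc, mul_rstar_self]
  tfae_have 2 → 1 := by
    rintro ⟨hLM, hop⟩ s t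
    have h := rle_mul (hop _ _ (hle_plus s t)) (hop _ _ (hle_star s t))
    rw [hLM s t] at h
    exact rle_antisymm (hPM1 s t) h
  tfae_have 3 → 1 := by
    rintro ⟨hLM, hop⟩ s t
    have h := rle_mul (hop _ _ (hle_plus s t)) (rle_refl (φ t))
    rw [hLM s t] at h
    exact rle_antisymm (hPM1 s t) h
  tfae_have 4 → 1 := by
    rintro ⟨hLM, hop⟩ s t
    have h := rle_mul (rle_refl (φ s)) (hop _ _ (hle_star s t))
    rw [hLM s t] at h
    exact rle_antisymm (hPM1 s t) h
  tfae_finish
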